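/- Let G be a finite group, g, h ∈ G, and suppose g normalizes the cyclic subgroup ⟨h⟩. Then the bicyclic unit b(g,h) = 1 + (1-h)·g·H̃ equals 1; conversely if g does not normalize ⟨h⟩, then b(g,h) ≠ 1 and b(g,h) has infinite order in U(ℤG). -/

import Mathlib

open MonoidAlgebra

private lemma conj_zpow' {G : Type*} [Group G] (g h : G) (j : ℤ) :
    (g⁻¹ * h * g) ^ j = g⁻¹ * h ^ j * g := by
  have := conj_zpow (i := j) (a := g⁻¹) (b := h)
  simpa using this

private lemma normalizer_of_conj_mem {G : Type*} [Group G] [Fintype G] {g h : G}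
    (hm : g⁻¹ * h * g ∈ Subgroup.zpowers h) : g ∈ Subgroup.normalizer (Subgroup.zpowers h : Set G) := by
  have horda : orderOf (g⁻¹ * h * g) = orderOf h := by
    have := (MulAut.conj g⁻¹).orderOf_eq h
    simpa [MulAut.conj_apply, mul_assoc] using this
  have hle : Subgroup.zpowers (g⁻¹ * h * g) ≤ Subgroup.zpowers h := by
    rwa [Subgroup.zpowers_le]
  have heq : Subgroup.zpowers (g⁻¹ * h * g) = Subgroup.zpowers h := by
    apply Subgroup.eq_of_le_of_card_ge hle
    rw [Nat.card_zpowers, Nat.card_zpowers, horda]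
  rw [Subgroup.mem_normalizer_iff]
  intro x
  constructor
  · rintro ⟨k, rfl⟩
    have hh : h ∈ Subgroup.zpowers (g⁻¹ * h * g) := by
      rw [heq]; exact Subgroup.mem_zpowers h
    obtain ⟨j, hj⟩ := hh
    have hj' : (g⁻¹ * h * g) ^ j = h := hj
    rw [conj_zpow'] at hj'
    have e2 : h ^ j = g * h * g⁻¹ := by
      have := congrArg (fun z => g * z * g⁻¹) hj'
      simp only [mul_assoc, mul_inv_cancel_left, inv_mul_cancel_left,
        mul_inv_cancel, mul_one] at this
      rw [this, mul_assoc]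
    refine ⟨j * k, ?_⟩
    show h ^ (j * k) = g * h ^ k * g⁻¹
    rw [zpow_mul, e2, conj_zpow]
  · intro hx
    obtain ⟨k, hk⟩ := hx
    have hk' : h ^ k = g * x * g⁻¹ := hk
    rw [← heq]
    refine ⟨k, ?_⟩
    show (g⁻¹ * h * g) ^ k = x
    rw [conj_zpow', hk']; group

private lemma T_mul_of {G : Type*} [Group G] (h : G) (n : ℕ) (hn : orderOf h = n) :
    (∑ k ∈ Finset.range n, (of ℤ G h) ^ k) * of ℤ G h
      = ∑ k ∈ Finset.range n, (of ℤ G h) ^ k := by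
  rw [Finset.sum_mul]
  simp_rw [← pow_succ]
  have hend : (of ℤ G h) ^ n = (of ℤ G h) ^ 0 := by
    rw [← map_pow, ← hn, pow_orderOf_eq_one, pow_zero, map_one]
  have h1 := (Finset.sum_range_succ' (fun k => (of ℤ G h) ^ k) n).symm.trans
    (Finset.sum_range_succ (fun k => (of ℤ G h) ^ k) n)
  simp only [hend] at h1
  exact add_right_cancel h1

private lemma of_mul_T {G : Type*} [Group G] (h : G) (n : ℕ) (hn : orderOf h = n) :
    of ℤ G h * (∑ k ∈ Finset.range n, (of ℤ G h) ^ k)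
      = ∑ k ∈ Finset.range n, (of ℤ G h) ^ k := by
  have comm : of ℤ G h * (∑ k ∈ Finset.range n, (of ℤ G h) ^ k)
      = (∑ k ∈ Finset.range n, (of ℤ G h) ^ k) * of ℤ G h := by
    rw [Finset.mul_sum, Finset.sum_mul]
    exact Finset.sum_congr rfl fun k _ => ((Commute.refl _).pow_right k).eq
  rw [comm, T_mul_of h n hn]

private lemma pow_mul_T {G : Type*} [Group G] (h : G) (n : ℕ) (hn : orderOf h = n) (m : ℕ) :
    of ℤ G (h ^ m) * (∑ k ∈ Finset.range n, (of ℤ G h) ^ k)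
      = ∑ k ∈ Finset.range n, (of ℤ G h) ^ k := by
  rw [map_pow]
  induction m with
  | zero => simp
  | succ m ih => rw [pow_succ, mul_assoc, of_mul_T h n hn, ih]

theorem bicyclic_unit_trivial_iff_normalizes {G : Type*} [Group G] [Fintype G] (g h : G)
    (n : ℕ) (hn : orderOf h = n) (b : MonoidAlgebra ℤ G)
    (hb : b = 1 + (1 - of ℤ G h) * of ℤ G g * ∑ k ∈ Finset.range n, (of ℤ G h) ^ k) :
    (g ∈ Subgroup.normalizer ((Subgroup.zpowers h : Subgroup G) : Set G) → b = 1) ∧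
    (g ∉ Subgroup.normalizer ((Subgroup.zpowers h : Subgroup G) : Set G) →
      b ≠ 1 ∧ ∀ m : ℕ, 0 < m → b ^ m ≠ 1) := by
  classical
  set T : MonoidAlgebra ℤ G := ∑ k ∈ Finset.range n, (of ℤ G h) ^ k with hT
  constructor
  · intro hg
    have hmem : g⁻¹ * h * g ∈ Subgroup.zpowers h := by
      have hg' : g⁻¹ ∈ Subgroup.normalizer (Subgroup.zpowers h : Set G) :=
        (Subgroup.normalizer (Subgroup.zpowers h : Set G)).inv_mem hg
      have := (Subgroup.mem_normalizer_iff.mp hg' h).mp (Subgroup.mem_zpowers h)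
      simpa using this
    obtain ⟨m, hmk⟩ := mem_powers_iff_mem_zpowers.mpr hmem
    have hmk' : h ^ m = g⁻¹ * h * g := hmk
    have key : h * g = g * h ^ m := by rw [hmk']; group
    have hzero : of ℤ G h * of ℤ G g * T = of ℤ G g * T := by
      rw [← map_mul, key, map_mul, mul_assoc, hT, pow_mul_T h n hn]
    rw [hb, sub_mul, one_mul, sub_mul, hzero, sub_self, add_zero]
  · intro hg
    have hmem : g⁻¹ * h * g ∉ Subgroup.zpowers h := fun hc => hg (normalizer_of_conj_mem hc)
    set N : MonoidAlgebra ℤ G := (1 - of ℤ G h) * of ℤ G g * T with hN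
    have hT0 : T * (1 - of ℤ G h) = 0 := by
      rw [mul_sub, mul_one, hT, T_mul_of h n hn, ← hT, sub_self]
    have hN2 : N * N = 0 := by
      have e : N * N
          = (1 - of ℤ G h) * (of ℤ G g * (T * (1 - of ℤ G h) * (of ℤ G g * T))) := by
        rw [hN]; simp only [mul_assoc]
      rw [e, hT0, zero_mul, mul_zero, mul_zero]
    have hNexp : N.coeff = ∑ k ∈ Finset.range n,
        (Finsupp.single (g * h ^ k) (1 : ℤ) - Finsupp.single (h * (g * h ^ k)) (1 : ℤ)) := by
      rw [hN, hT, Finset.mul_sum, MonoidAlgebra.coeff_sum]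
      refine Finset.sum_congr rfl fun k _ => ?_
      rw [sub_mul, one_mul, sub_mul, ← map_pow, mul_assoc]
      simp only [← map_mul]
      rfl
    have npos : 0 < n := hn ▸ orderOf_pos h
    have hNg : N.coeff g = 1 := by
      rw [hNexp, Finsupp.finset_sum_apply]
      have hterm : ∀ k ∈ Finset.range n,
          (Finsupp.single (g * h ^ k) (1 : ℤ) - Finsupp.single (h * (g * h ^ k)) (1 : ℤ)) g
            = if k = 0 then 1 else 0 := by
        intro k hk
        rw [Finsupp.sub_apply, Finsupp.single_apply, Finsupp.single_apply]
        have h2 : ¬ (h * (g * h ^ k) = g) := by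
          intro habs
          apply hmem
          have e0 : h * g = g * (h ^ k)⁻¹ := by
            have := congrArg (fun z => z * (h ^ k)⁻¹) habs
            simpa [mul_assoc] using this
          have e : g⁻¹ * h * g = (h ^ k)⁻¹ := by
            rw [mul_assoc, e0]; group
          refine ⟨-(k : ℤ), ?_⟩
          show h ^ (-(k : ℤ)) = g⁻¹ * h * g
          rw [zpow_neg, zpow_natCast, ← e]
        by_cases hk0 : k = 0
        · subst hk0
          have h3 : h ≠ 1 := fun h1 => h2 (by simp [h1])
          simp [h2, h3]
        · have hgk : ¬ (g * h ^ k = g) := by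
            intro habs
            have h1 : h ^ k = 1 := by rwa [mul_eq_left] at habs
            have hd := orderOf_dvd_of_pow_eq_one h1
            rw [hn] at hd
            exact hk0 (Nat.eq_zero_of_dvd_of_lt hd (Finset.mem_range.mp hk))
          rw [if_neg hk0, if_neg hgk, if_neg h2, sub_zero]
      rw [Finset.sum_congr rfl hterm, Finset.sum_ite_eq' (Finset.range n) 0 (fun _ => (1 : ℤ))]
      rw [if_pos (Finset.mem_range.mpr npos)]
    have hpow : ∀ m : ℕ, b ^ m = 1 + MonoidAlgebra.single (1 : G) (m : ℤ) * N := by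
      intro m
      induction m with
      | zero => simp
      | succ m ih =>
        rw [pow_succ, ih, hb]
        have e1 : MonoidAlgebra.single (1 : G) ((m + 1 : ℕ) : ℤ)
            = MonoidAlgebra.single (1 : G) (m : ℤ) + MonoidAlgebra.single (1 : G) (1 : ℤ) := by
          push_cast
          exact MonoidAlgebra.single_add _ _ _
        rw [e1, add_mul, ← MonoidAlgebra.one_def, one_mul]
        rw [add_mul, one_mul, mul_add, mul_one, mul_assoc, hN2, mul_zero, add_zero]
        abel
    have hkey : ∀ m : ℕ, 0 < m → b ^ m ≠ 1 := by
      intro m hm habs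
      rw [hpow m] at habs
      have h0 : MonoidAlgebra.single (1 : G) (m : ℤ) * N = 0 := by
        rwa [add_eq_left] at habs
      have h1 : (MonoidAlgebra.single (1 : G) (m : ℤ) * N).coeff g = (m : ℤ) * N.coeff g :=
        MonoidAlgebra.coeff_single_one_mul N (m : ℤ) g
      rw [h0, hNg, mul_one] at h1
      have hz : (0 : MonoidAlgebra ℤ G).coeff g = 0 := rfl
      rw [hz] at h1
      exact hm.ne' (by exact_mod_cast h1.symm)
    exact ⟨fun habs => hkey 1 one_pos (by rwa [pow_one]), hkey⟩
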